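/- The ℤ-module ℤ(p^∞) (the Prüfer p-group) has no prime submodules, i.e., Spec(ℤ(p^∞)) = ∅, for any prime integer p. -/

import Mathlib

open Submodule

variable {R : Type*} [CommRing R] {M : Type*} [AddCommGroup M] [Module R M]

/-- A submodule `N` of `M` is *prime* if `N ≠ M` and whenever `r • m ∈ N`,
either `r ∈ (N :ᵣ M)` or `m ∈ N`. Here `(N :ᵣ M)` is `N.colon ⊤`. -/
def IsPrimeSubmodule (N : Submodule R M) : Prop :=
  N ≠ ⊤ ∧ ∀ (r : R) (m : M), r • m ∈ N → r ∈ N.colon ⊤ ∨ m ∈ N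

/-- The prime spectrum of the module `M`: the set of prime submodules. -/
def MSpec (R M : Type*) [CommRing R] [AddCommGroup M] [Module R M] :=
  {P : Submodule R M // IsPrimeSubmodule P}

/-- `V(N) = {P ∈ Spec(M) | (N : M) ⊆ (P : M)}`. -/
def VV (N : Submodule R M) : Set (MSpec R M) :=
  {P | N.colon ⊤ ≤ P.1.colon ⊤}

/-- The basic open set `X_r = Spec(M) \ V(rM)`. -/
def Xb (r : R) : Set (MSpec R M) :=
  (VV (Ideal.span {r} • (⊤ : Submodule R M)))ᶜ


/-- The Prüfer `p`-group `ℤ(p^∞)`, realized as the `p`-primary torsion submodule of the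
`ℤ`-module `ℚ/ℤ`. -/
def PruferModule (p : ℕ) : Submodule ℤ (ℚ ⧸ Submodule.span ℤ {(1 : ℚ)}) where
  carrier := {x | ∃ n : ℕ, (p : ℤ) ^ n • x = 0}
  add_mem' := by
    rintro a b ⟨n, hn⟩ ⟨m, hm⟩
    refine ⟨n + m, ?_⟩
    have h1 : ((p : ℤ) ^ (n + m)) • a = 0 := by
      rw [pow_add, mul_comm, mul_smul, hn, smul_zero]
    have h2 : ((p : ℤ) ^ (n + m)) • b = 0 := by
      rw [pow_add, mul_smul, hm, smul_zero]
    rw [smul_add, h1, h2, add_zero]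
  zero_mem' := ⟨0, smul_zero _⟩
  smul_mem' := by
    rintro c x ⟨n, hn⟩
    exact ⟨n, by rw [smul_comm, hn, smul_zero]⟩

/-- The Prüfer group `ℤ(p^∞)` has no prime submodules: `Spec(ℤ(p^∞)) = ∅`. -/
lemma prufer_divisible (p : ℕ) (hp : p.Prime) (x : PruferModule p) :
    ∃ y : PruferModule p, (p : ℤ) • y = x := by
  obtain ⟨x, hx⟩ := x
  obtain ⟨n, hn⟩ := hx
  obtain ⟨q, rfl⟩ := Submodule.Quotient.mk_surjective _ x
  have hp0 : (p : ℚ) ≠ 0 := Nat.cast_ne_zero.mpr hp.ne_zero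
  have hy : (p : ℤ) ^ (n + 1) • (Submodule.Quotient.mk (q / p) :
      ℚ ⧸ Submodule.span ℤ {(1 : ℚ)}) = 0 := by
    have : (p : ℤ) ^ (n + 1) • (q / p) = (p : ℤ) ^ n • q := by
      field_simp
      rw [zsmul_eq_mul, zsmul_eq_mul]; push_cast
      rw [pow_succ, mul_assoc, mul_div_assoc', mul_comm (p : ℚ) q, mul_div_assoc, div_self hp0, mul_one]
    rw [← Submodule.Quotient.mk_smul, this, Submodule.Quotient.mk_smul, hn]
  refine ⟨⟨Submodule.Quotient.mk (q / p), n + 1, hy⟩, ?_⟩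
  apply Subtype.ext
  show (p : ℤ) • (Submodule.Quotient.mk (q / p) : ℚ ⧸ Submodule.span ℤ {(1 : ℚ)})
      = Submodule.Quotient.mk q
  rw [← Submodule.Quotient.mk_smul]
  congr 1
  rw [zsmul_eq_mul, Int.cast_natCast]
  field_simp

/-- The Prüfer group `ℤ(p^∞)` has no prime submodules: `Spec(ℤ(p^∞)) = ∅`. -/
theorem prufer_primeless (p : ℕ) (hp : p.Prime) :
    ∀ N : Submodule ℤ (PruferModule p), ¬ IsPrimeSubmodule N := by
  rintro N ⟨hne, hpr⟩
  by_cases hc : (p : ℤ) ∈ N.colon ⊤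
  · apply hne
    rw [eq_top_iff]
    intro m _
    obtain ⟨y, hy⟩ := prufer_divisible p hp m
    rw [← hy]
    exact (Submodule.mem_colon (N := N)).mp hc y (by simp)
  · apply hne
    rw [eq_top_iff]
    intro m _
    obtain ⟨n, hn⟩ := m.2
    have hn' : (p : ℤ) ^ n • m = 0 := Subtype.ext hn
    clear hn
    induction n generalizing m with
    | zero =>
      have : m = 0 := by simpa using hn'
      rw [this]; exact N.zero_mem
    | succ k ih =>
      have hk : (p : ℤ) ^ k • ((p : ℤ) • m) = 0 := by
        rw [← mul_smul, ← pow_succ, hn']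
      have hpm : (p : ℤ) • m ∈ N := ih mem_top hk
      rcases hpr p m hpm with h | h
      · exact absurd h hc
      · exact h
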